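/- Let (G, B) be a metric n-Lie algebra with dim G > 1. Then dim B(G) ≥ dim C(G) + 1, where B(G) is the span of all nondegenerate invariant symmetric bilinear forms on G and C(G) is the center. -/

import Mathlib

open scoped BigOperators

section NLiePreamble

variable {n : ℕ} {G : Type*} [AddCommGroup G] [Module ℂ G]

/-- The inner derivation `ad_y z = [y₁, …, y_{n+1}, z]` determined by an
`(n+2)`-ary alternating bracket. -/
def nAd (br : AlternatingMap ℂ G G (Fin (n + 2))) (y : Fin (n + 1) → G) (z : G) : G :=
  br (Fin.snoc y z)

/-- The generalized Jacobi identity: the bracket makes `G` an `(n+2)`-Lie algebra. -/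
def IsNLie (br : AlternatingMap ℂ G G (Fin (n + 2))) : Prop :=
  ∀ (x : Fin (n + 2) → G) (y : Fin (n + 1) → G),
    nAd br y (br x) = ∑ i, br (Function.update x i (nAd br y (x i)))

/-- A submodule `I` is an ideal: `[I, G, …, G] ⊆ I`. -/
def IsIdeal (br : AlternatingMap ℂ G G (Fin (n + 2))) (I : Submodule ℂ G) : Prop :=
  ∀ (y : Fin (n + 1) → G), ∀ x ∈ I, br (Fin.snoc y x) ∈ I

/-- Invariance of a bilinear form under the bracket. -/
def IsInvariantForm (br : AlternatingMap ℂ G G (Fin (n + 2)))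
    (K : LinearMap.BilinForm ℂ G) : Prop :=
  ∀ (x : Fin (n + 1) → G) (y₁ y₂ : G),
    K (br (Fin.snoc x y₁)) y₂ = - K (br (Fin.snoc x y₂)) y₁

/-- A metric on an `n`-Lie algebra: a nondegenerate invariant symmetric bilinear form. -/
def IsMetric (br : AlternatingMap ℂ G G (Fin (n + 2)))
    (B : LinearMap.BilinForm ℂ G) : Prop :=
  B.Nondegenerate ∧ (∀ x y : G, B x y = B y x) ∧ IsInvariantForm br B

/-- The span `[W₁, …, W_{n+2}]` of all brackets with entries in the given subspaces. -/
def bracketSpan (br : AlternatingMap ℂ G G (Fin (n + 2)))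
    (W : Fin (n + 2) → Submodule ℂ G) : Submodule ℂ G :=
  Submodule.span ℂ {z | ∃ w : Fin (n + 2) → G, (∀ i, w i ∈ W i) ∧ z = br w}

/-- The derived algebra `[G, …, G]`. -/
def derivedAlg (br : AlternatingMap ℂ G G (Fin (n + 2))) : Submodule ℂ G :=
  bracketSpan br fun _ => ⊤

/-- `[I, …, I]` for a subspace `I`. -/
def derivedStep (br : AlternatingMap ℂ G G (Fin (n + 2))) (I : Submodule ℂ G) :
    Submodule ℂ G :=
  bracketSpan br fun _ => I

/-- `[J, H, G, …, G]` for subspaces `J, H`. -/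
def pairBracket (br : AlternatingMap ℂ G G (Fin (n + 2))) (J H : Submodule ℂ G) :
    Submodule ℂ G :=
  bracketSpan br (Fin.cons J (Fin.cons H fun _ => (⊤ : Submodule ℂ G)))

/-- `[I, G, …, G]` for a subspace `I`. -/
def idealBracket (br : AlternatingMap ℂ G G (Fin (n + 2))) (I : Submodule ℂ G) :
    Submodule ℂ G :=
  bracketSpan br (Fin.cons I fun _ => (⊤ : Submodule ℂ G))

/-- The centralizer `C_G(I) = {x : [x, I, G, …, G] = 0}` of a subspace `I`. -/
def centralizer (br : AlternatingMap ℂ G G (Fin (n + 2))) (I : Submodule ℂ G) :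
    Submodule ℂ G where
  carrier := {x | ∀ v ∈ I, ∀ y : Fin n → G, br (Fin.cons x (Fin.cons v y)) = 0}
  add_mem' := by
    intro a b ha hb v hv y
    have := br.toMultilinearMap.cons_add (Fin.cons v y) a b
    simp only [AlternatingMap.coe_multilinearMap] at this
    rw [this, ha v hv y, hb v hv y, add_zero]
  zero_mem' := by
    intro v hv y
    have := br.toMultilinearMap.cons_smul (Fin.cons v y) (0 : ℂ) 0
    simpa using (br.toMultilinearMap.map_coord_zero (m := Fin.cons 0 (Fin.cons v y)) 0 rfl)
  smul_mem' := by
    intro c a ha v hv y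
    have := br.toMultilinearMap.cons_smul (Fin.cons v y) c a
    simp only [AlternatingMap.coe_multilinearMap] at this
    rw [this, ha v hv y, smul_zero]

/-- The center `C(G)`. -/
def center (br : AlternatingMap ℂ G G (Fin (n + 2))) : Submodule ℂ G :=
  centralizer br ⊤

/-- Nondegeneracy of `B` restricted to a subspace `W`. -/
def NondegOn (B : LinearMap.BilinForm ℂ G) (W : Submodule ℂ G) : Prop :=
  ∀ x ∈ W, (∀ y ∈ W, B x y = 0) → x = 0

/-- `(G, B)` is `B`-irreducible: no nontrivial nondegenerate ideals. -/
def BIrreducible (br : AlternatingMap ℂ G G (Fin (n + 2)))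
    (B : LinearMap.BilinForm ℂ G) : Prop :=
  ∀ I : Submodule ℂ G, IsIdeal br I → NondegOn B I → I = ⊥ ∨ I = ⊤

/-- `W` is a subalgebra. -/
def IsSubalgebra (br : AlternatingMap ℂ G G (Fin (n + 2))) (W : Submodule ℂ G) : Prop :=
  ∀ x : Fin (n + 2) → G, (∀ i, x i ∈ W) → br x ∈ W

/-- `I` is an ideal of the subalgebra `W`. -/
def IsIdealOf (br : AlternatingMap ℂ G G (Fin (n + 2))) (W I : Submodule ℂ G) : Prop :=
  I ≤ W ∧ ∀ (y : Fin (n + 1) → G), (∀ i, y i ∈ W) → ∀ x ∈ I, br (Fin.snoc y x) ∈ I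

/-- The subalgebra `W` is a simple `n`-Lie algebra. -/
def IsSimpleAlg (br : AlternatingMap ℂ G G (Fin (n + 2))) (W : Submodule ℂ G) : Prop :=
  derivedStep br W ≠ ⊥ ∧ ∀ I : Submodule ℂ G, IsIdealOf br W I → I = ⊥ ∨ I = W

/-- The subalgebra `W` is strong semisimple: a direct sum of simple ideals. -/
def IsStrongSemisimple (br : AlternatingMap ℂ G G (Fin (n + 2)))
    (W : Submodule ℂ G) : Prop :=
  ∃ (m : ℕ) (S : Fin m → Submodule ℂ G),
    (∀ i, IsIdealOf br W (S i) ∧ IsSimpleAlg br (S i)) ∧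
    iSupIndep S ∧ (⨆ i, S i) = W

/-- `I` is solvable (via the derived series). -/
def NLieSolvable (br : AlternatingMap ℂ G G (Fin (n + 2))) (I : Submodule ℂ G) : Prop :=
  ∃ k : ℕ, (derivedStep br)^[k] I = ⊥

/-- `R` is the radical: the maximal solvable ideal. -/
def NLieRadical (br : AlternatingMap ℂ G G (Fin (n + 2))) (R : Submodule ℂ G) : Prop :=
  IsIdeal br R ∧ NLieSolvable br R ∧
    ∀ I : Submodule ℂ G, IsIdeal br I → NLieSolvable br I → I ≤ R

/-- A Levi decomposition `G = S ⊕ R`. -/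
def IsLeviDecomp (br : AlternatingMap ℂ G G (Fin (n + 2)))
    (S R : Submodule ℂ G) : Prop :=
  NLieRadical br R ∧ IsSubalgebra br S ∧ IsStrongSemisimple br S ∧ IsCompl S R

/-- A minimal ideal of `G`. -/
def IsMinimalIdeal (br : AlternatingMap ℂ G G (Fin (n + 2))) (J : Submodule ℂ G) : Prop :=
  IsIdeal br J ∧ J ≠ ⊥ ∧
    ∀ I : Submodule ℂ G, IsIdeal br I → I ≤ J → I = ⊥ ∨ I = J

/-- The socle: the sum of all minimal ideals. -/
def socle (br : AlternatingMap ℂ G G (Fin (n + 2))) : Submodule ℂ G :=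
  sSup {J | IsMinimalIdeal br J}

/-- `H` is an `S`-submodule: `[S, …, S, H] ⊆ H`. -/
def IsSModule (br : AlternatingMap ℂ G G (Fin (n + 2))) (S H : Submodule ℂ G) : Prop :=
  ∀ (y : Fin (n + 1) → G), (∀ i, y i ∈ S) → ∀ x ∈ H, br (Fin.snoc y x) ∈ H

/-- `H` is an irreducible `S`-submodule. -/
def IsIrreducibleSModule (br : AlternatingMap ℂ G G (Fin (n + 2)))
    (S H : Submodule ℂ G) : Prop :=
  IsSModule br S H ∧ H ≠ ⊥ ∧
    ∀ K : Submodule ℂ G, K ≤ H → IsSModule br S K → K = ⊥ ∨ K = H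

/-- The space of invariant symmetric bilinear forms on `G`. -/
def invSymForms (br : AlternatingMap ℂ G G (Fin (n + 2))) :
    Submodule ℂ (LinearMap.BilinForm ℂ G) where
  carrier := {K | (∀ x y : G, K x y = K y x) ∧ IsInvariantForm br K}
  add_mem' := by
    rintro K L ⟨hK1, hK2⟩ ⟨hL1, hL2⟩
    refine ⟨fun x y => by simp [hK1 x y, hL1 x y], fun x y₁ y₂ => ?_⟩
    simp only [LinearMap.add_apply]
    rw [hK2 x y₁ y₂, hL2 x y₁ y₂]; ring
  zero_mem' := ⟨fun x y => by simp, fun x y₁ y₂ => by simp⟩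
  smul_mem' := by
    rintro c K ⟨hK1, hK2⟩
    refine ⟨fun x y => by simp [hK1 x y], fun x y₁ y₂ => ?_⟩
    simp only [LinearMap.smul_apply, smul_eq_mul]
    rw [hK2 x y₁ y₂]; ring

/-- The span of all nondegenerate invariant symmetric bilinear forms (the metric space `B(G)`). -/
def metricSpan (br : AlternatingMap ℂ G G (Fin (n + 2))) :
    Submodule ℂ (LinearMap.BilinForm ℂ G) :=
  Submodule.span ℂ {K : LinearMap.BilinForm ℂ G | IsMetric br K}

/-- `Γ_B(G)`: `B`-self-adjoint elements of the centroid. -/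
def centroidB (br : AlternatingMap ℂ G G (Fin (n + 2)))
    (B : LinearMap.BilinForm ℂ G) : Submodule ℂ (G →ₗ[ℂ] G) where
  carrier := {φ | (∀ (x : Fin (n + 1) → G) (z : G),
      φ (br (Fin.snoc x z)) = br (Fin.snoc x (φ z))) ∧
    ∀ x y : G, B (φ x) y = B x (φ y)}
  add_mem' := by
    rintro φ ψ ⟨hφ1, hφ2⟩ ⟨hψ1, hψ2⟩
    constructor
    · intro x z
      have hadd := br.toMultilinearMap.snoc_add x (φ z) (ψ z)
      simp only [AlternatingMap.coe_multilinearMap] at hadd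
      simp [hφ1 x z, hψ1 x z, hadd]
    · intro x y; simp [hφ2 x y, hψ2 x y]
  zero_mem' := by
    constructor
    · intro x z
      have h0 := br.toMultilinearMap.map_coord_zero (m := Fin.snoc x (0 : G)) (Fin.last _)
        (by simp)
      simp only [AlternatingMap.coe_multilinearMap] at h0
      simp [h0]
    · intro x y; simp
  smul_mem' := by
    rintro c φ ⟨hφ1, hφ2⟩
    constructor
    · intro x z
      have hs := br.toMultilinearMap.snoc_smul x c (φ z)
      simp only [AlternatingMap.coe_multilinearMap] at hs
      simp [hφ1 x z, hs]
    · intro x y; simp [hφ2 x y]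

end NLiePreamble


variable {n : ℕ} {G : Type*} [AddCommGroup G] [Module ℂ G]

section AuxLemmas

lemma central_eval_zero (br : AlternatingMap ℂ G G (Fin (n + 2))) {a : G}
    (ha : a ∈ center br) (u : Fin (n + 2) → G) (j : Fin (n + 2)) (hu : u j = a) :
    br u = 0 := by
  classical
  have key : ∀ v : Fin (n + 2) → G, v 0 = a → br v = 0 := by
    intro v hv
    have hv' : v = Fin.cons a (Fin.cons (v 1) (fun i => v i.succ.succ)) := by
      funext i
      refine Fin.cases ?_ (fun i => ?_) i
      · simp [hv]
      · refine Fin.cases ?_ (fun k => ?_) i <;> simp [Fin.succ_zero_eq_one]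
    rw [hv']
    exact ha (v 1) trivial _
  by_cases hj : j = (0 : Fin (n + 2))
  · exact key u (hj ▸ hu)
  · have hswap := AlternatingMap.map_swap br u (i := (0 : Fin (n + 2))) (j := j) (Ne.symm hj)
    have h0 : (u ∘ Equiv.swap (0 : Fin (n + 2)) j) 0 = a := by
      simp [Equiv.swap_apply_left, hu]
    have hz := key _ h0
    rw [hswap] at hz
    exact neg_eq_zero.mp hz

lemma central_snoc_zero (br : AlternatingMap ℂ G G (Fin (n + 2))) {a : G}
    (ha : a ∈ center br) (x : Fin (n + 1) → G) :
    br (Fin.snoc x a) = 0 :=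
  central_eval_zero br ha _ (Fin.last _) (Fin.snoc_last _ _)

/-- The symmetric product form `S_B(a,b)(x,y) = B(a,x)B(b,y) + B(b,x)B(a,y)`. -/
noncomputable def Sform (B : LinearMap.BilinForm ℂ G) (a b : G) : LinearMap.BilinForm ℂ G :=
  (B a).smulRight (B b) + (B b).smulRight (B a)

lemma Sform_apply (B : LinearMap.BilinForm ℂ G) (a b x y : G) :
    Sform B a b x y = B a x * B b y + B b x * B a y := by
  simp [Sform, LinearMap.smulRight_apply, smul_eq_mul]

/-- `Sform B a` as a linear map in the second variable. -/
noncomputable def SformL (B : LinearMap.BilinForm ℂ G) (a : G) : G →ₗ[ℂ] LinearMap.BilinForm ℂ G where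
  toFun := Sform B a
  map_add' := by
    intro u v
    ext x y
    simp only [Sform_apply, map_add, LinearMap.add_apply]
    ring
  map_smul' := by
    intro c u
    ext x y
    simp only [Sform_apply, map_smul, LinearMap.smul_apply, smul_eq_mul, RingHom.id_apply]
    ring

lemma Sform_mem_invSymForms (br : AlternatingMap ℂ G G (Fin (n + 2)))
    (B : LinearMap.BilinForm ℂ G) (hB : IsMetric br B) {a b : G}
    (ha : a ∈ center br) (hb : b ∈ center br) : Sform B a b ∈ invSymForms br := by
  have key : ∀ c : G, c ∈ center br → ∀ (x : Fin (n + 1) → G) (y : G),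
      B c (br (Fin.snoc x y)) = 0 := by
    intro c hc x y
    rw [hB.2.1 c (br (Fin.snoc x y)), hB.2.2 x y c, central_snoc_zero br hc x]
    simp
  refine ⟨fun x y => ?_, fun x y₁ y₂ => ?_⟩
  · rw [Sform_apply, Sform_apply]; ring
  · rw [Sform_apply, Sform_apply, key a ha x y₁, key b hb x y₁,
      key a ha x y₂, key b hb x y₂]
    ring

lemma Sform_eq_zero {B : LinearMap.BilinForm ℂ G} (hB : B.Nondegenerate) {a b : G}
    (ha : a ≠ 0) (h : Sform B a b = 0) : b = 0 := by
  have h' : ∀ x y, B a x * B b y + B b x * B a y = 0 := by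
    intro x y
    rw [← Sform_apply, h]
    simp
  obtain ⟨x₀, hx₀⟩ : ∃ x, B a x ≠ 0 := by
    by_contra hcon
    push_neg at hcon
    exact ha (hB.1 a hcon)
  have hbx₀ : B b x₀ = 0 := by
    have h2 : B a x₀ * B b x₀ = 0 := by linear_combination (h' x₀ x₀) / 2
    rcases mul_eq_zero.mp h2 with h | h
    · exact absurd h hx₀
    · exact h
  refine hB.1 b (fun y => ?_)
  have := h' x₀ y
  rw [hbx₀, zero_mul, add_zero] at this
  rcases mul_eq_zero.mp this with h | h
  · exact absurd h hx₀
  · exact h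

lemma mem_metricSpan_of_invSym (br : AlternatingMap ℂ G G (Fin (n + 2)))
    [FiniteDimensional ℂ G] {B : LinearMap.BilinForm ℂ G}
    (hB : IsMetric br B) {K : LinearMap.BilinForm ℂ G} (hK : K ∈ invSymForms br) :
    K ∈ metricSpan br := by
  classical
  let b : Module.Basis (Fin (Module.finrank ℂ G)) ℂ G := Module.finBasis ℂ G
  set M := LinearMap.BilinForm.toMatrix b B with hM
  set N := LinearMap.BilinForm.toMatrix b K with hN
  have hdet : M.det ≠ 0 := (LinearMap.BilinForm.nondegenerate_iff_det_ne_zero b).mp hB.1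
  set Q : Matrix (Fin (Module.finrank ℂ G)) (Fin (Module.finrank ℂ G)) (Polynomial ℂ) :=
    Matrix.of fun i j => Polynomial.C (M i j) + Polynomial.X * Polynomial.C (N i j) with hQ
  have hev : ∀ t : ℂ, Polynomial.eval t Q.det = (M + t • N).det := by
    intro t
    have hmap := RingHom.map_det (Polynomial.evalRingHom t) Q
    rw [show Polynomial.eval t Q.det = (Polynomial.evalRingHom t) Q.det from rfl, hmap]
    congr 1
    ext i j
    simp only [RingHom.mapMatrix_apply, Matrix.map_apply, hQ, Matrix.of_apply, Polynomial.coe_evalRingHom,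
      Polynomial.eval_add, Polynomial.eval_mul, Polynomial.eval_C, Polynomial.eval_X,
      Matrix.add_apply, Matrix.smul_apply, smul_eq_mul]
  have hp : Q.det ≠ 0 := by
    intro h
    apply hdet
    have h0 := hev 0
    rw [h] at h0
    simpa using h0.symm
  obtain ⟨ε, hε⟩ :=
    (Set.Finite.insert (0 : ℂ) (Polynomial.finite_setOf_isRoot hp)).exists_notMem
  have hε0 : ε ≠ 0 := fun h => hε (by simp [h])
  have hεroot : Polynomial.eval ε Q.det ≠ 0 := fun h => hε (Set.mem_insert_of_mem _ h)
  have hnd : (B + ε • K).Nondegenerate := by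
    rw [LinearMap.BilinForm.nondegenerate_iff_det_ne_zero b, map_add, map_smul,
      ← hM, ← hN, ← hev]
    exact hεroot
  obtain ⟨hsym, hinv⟩ := (invSymForms br).add_mem
    (show B ∈ invSymForms br from ⟨hB.2.1, hB.2.2⟩) ((invSymForms br).smul_mem ε hK)
  have hBmem : B ∈ metricSpan br := Submodule.subset_span hB
  have hBK : (B + ε • K) ∈ metricSpan br := Submodule.subset_span ⟨hnd, hsym, hinv⟩
  have hKeq : K = ε⁻¹ • ((B + ε • K) - B) := by
    rw [add_sub_cancel_left, smul_smul, inv_mul_cancel₀ hε0, one_smul]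
  rw [hKeq]
  exact Submodule.smul_mem _ _ (Submodule.sub_mem _ hBK hBmem)

end AuxLemmas

theorem metric_dimension_ge_center_dim_add_one
    (br : AlternatingMap ℂ G G (Fin (n + 2))) (hLie : IsNLie br)
    [FiniteDimensional ℂ G]
    (B : LinearMap.BilinForm ℂ G) (hB : IsMetric br B)
    (hdim : 1 < Module.finrank ℂ G) :
    Module.finrank ℂ (metricSpan br) ≥ Module.finrank ℂ (center br) + 1 := by
  classical
  obtain ⟨hBnd, hBsym, hBinv⟩ := hB
  have hBmetric : IsMetric br B := ⟨hBnd, hBsym, hBinv⟩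
  have hGnt : Nontrivial G := (Module.finrank_pos_iff (R := ℂ) (M := G)).mp (by omega)
  have hBne : B ≠ 0 := by
    obtain ⟨x, hx⟩ := exists_ne (0 : G)
    intro h
    exact hx (hBnd.1 x (fun y => by rw [h]; simp))
  set W : Submodule ℂ (LinearMap.BilinForm ℂ G) :=
    Submodule.span ℂ {K | ∃ a ∈ center br, ∃ b ∈ center br, K = Sform B a b} with hW
  have hWle : W ≤ metricSpan br := by
    rw [hW, Submodule.span_le]
    rintro K ⟨a, ha, b, hb, rfl⟩
    exact mem_metricSpan_of_invSym br hBmetric (Sform_mem_invSymForms br B hBmetric ha hb)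
  have hBspan : Submodule.span ℂ {B} ≤ metricSpan br := by
    rw [Submodule.span_singleton_le_iff_mem]
    exact Submodule.subset_span hBmetric
  have hmono := Submodule.finrank_mono (sup_le hBspan hWle)
  refine le_trans ?_ hmono
  by_cases hBW : B ∈ W
  · -- B lies in the span of the product forms: then the center is everything
    have hperp : ∀ x : G, (∀ a ∈ center br, B a x = 0) → x = 0 := by
      intro x hx
      have hker : W ≤ LinearMap.ker (LinearMap.applyₗ (R := ℂ) x) := by
        rw [hW, Submodule.span_le]
        rintro K ⟨a, ha, b, hb, rfl⟩
        rw [SetLike.mem_coe, LinearMap.mem_ker]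
        show Sform B a b x = 0
        ext y
        simp [Sform_apply, hx a ha, hx b hb]
      have hx0 : B x = 0 := hker hBW
      exact hBnd.1 x (fun y => by rw [hx0]; simp)
    have hCtop : center br = ⊤ := by
      let ρ : G →ₗ[ℂ] ((center br) →ₗ[ℂ] ℂ) := (B ∘ₗ (center br).subtype).flip
      have hinj : Function.Injective ρ := by
        rw [← LinearMap.ker_eq_bot, Submodule.eq_bot_iff]
        intro x hxk
        refine hperp x (fun a ha => ?_)
        have h0 : ρ x ⟨a, ha⟩ = 0 := by
          rw [LinearMap.mem_ker.mp hxk]; rfl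
        exact h0
      have h1 : Module.finrank ℂ G ≤ Module.finrank ℂ ((center br) →ₗ[ℂ] ℂ) :=
        LinearMap.finrank_le_finrank_of_injective hinj
      rw [Module.finrank_linearMap_self] at h1
      exact Submodule.eq_top_of_finrank_eq
        (le_antisymm (Submodule.finrank_le _) h1)
    have hsupW : Submodule.span ℂ {B} ⊔ W = W :=
      sup_eq_right.mpr ((Submodule.span_singleton_le_iff_mem _ _).mpr hBW)
    rw [hsupW, hCtop, finrank_top]
    -- need: finrank G + 1 ≤ finrank W
    set d := Module.finrank ℂ G with hd
    let b : Module.Basis (Fin d) ℂ G := Module.finBasis ℂ G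
    let aB : Module.Basis (Fin d) ℂ G := LinearMap.BilinForm.dualBasis B hBnd b
    have hab : ∀ i j, B (aB i) (b j) = if j = i then 1 else 0 := fun i j =>
      LinearMap.BilinForm.apply_dualBasis_left hBnd b i j
    have hd2 : 1 < d := hdim
    let i0 : Fin d := ⟨0, by omega⟩
    let i1 : Fin d := ⟨1, by omega⟩
    have hmemC : ∀ v : G, v ∈ center br := by rw [hCtop]; exact fun v => trivial
    let ψ : G →ₗ[ℂ] LinearMap.BilinForm ℂ G := SformL B (aB i0)
    have hψinj : Function.Injective ψ := by
      rw [← LinearMap.ker_eq_bot, Submodule.eq_bot_iff]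
      intro v hv
      exact Sform_eq_zero hBnd (aB.ne_zero i0) (LinearMap.mem_ker.mp hv)
    have hψrange : LinearMap.range ψ ≤ W := by
      rintro K ⟨v, rfl⟩
      exact Submodule.subset_span ⟨aB i0, hmemC _, v, hmemC _, rfl⟩
    have hr1 : Module.finrank ℂ (LinearMap.range ψ) = d := by
      rw [LinearMap.finrank_range_of_inj hψinj]
    have hKW : Sform B (aB i1) (aB i1) ∈ W :=
      Submodule.subset_span ⟨aB i1, hmemC _, aB i1, hmemC _, rfl⟩
    have hKnot : Sform B (aB i1) (aB i1) ∉ LinearMap.range ψ := by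
      rintro ⟨v, hv⟩
      have heq := congrArg (fun K : LinearMap.BilinForm ℂ G => K (b i1) (b i1)) hv
      have hψv : ψ v (b i1) (b i1) = Sform B (aB i0) v (b i1) (b i1) := rfl
      simp only [hψv] at heq
      rw [Sform_apply, Sform_apply, hab i0 i1, hab i1 i1] at heq
      have hne : ¬(i1 = i0) := by simp [i0, i1, Fin.ext_iff]
      rw [if_neg hne, if_pos rfl] at heq
      norm_num at heq
    by_contra hcon
    push_neg at hcon
    have hle : Module.finrank ℂ W ≤ Module.finrank ℂ (LinearMap.range ψ) := by omega
    exact hKnot ((Submodule.eq_of_le_of_finrank_le hψrange hle) ▸ hKW)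
  · -- B is not in W: span{B} and W are disjoint
    have hinf : Submodule.span ℂ {B} ⊓ W = ⊥ := by
      rw [Submodule.eq_bot_iff]
      intro K hK
      obtain ⟨hK1, hK2⟩ := Submodule.mem_inf.mp hK
      obtain ⟨t, rfl⟩ := Submodule.mem_span_singleton.mp hK1
      rcases eq_or_ne t 0 with rfl | ht
      · simp
      · exfalso
        apply hBW
        have hmem := W.smul_mem t⁻¹ hK2
        rwa [smul_smul, inv_mul_cancel₀ ht, one_smul] at hmem
    have hWc : Module.finrank ℂ (center br) ≤ Module.finrank ℂ W := by
      rcases eq_or_ne (center br) ⊥ with hCbot | hCne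
      · rw [hCbot, finrank_bot]
        omega
      · obtain ⟨c₀, hc₀C, hc₀⟩ := (Submodule.ne_bot_iff (center br)).mp hCne
        let ψ : (center br) →ₗ[ℂ] LinearMap.BilinForm ℂ G :=
          (SformL B c₀).comp (center br).subtype
        have hinj : Function.Injective ψ := by
          rw [← LinearMap.ker_eq_bot, Submodule.eq_bot_iff]
          intro v hv
          have hv0 : Sform B c₀ (v : G) = 0 := LinearMap.mem_ker.mp hv
          exact Subtype.ext (Sform_eq_zero hBnd hc₀ hv0)
        have hrange : LinearMap.range ψ ≤ W := by
          rintro K ⟨v, rfl⟩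
          exact Submodule.subset_span ⟨c₀, hc₀C, (v : G), v.2, rfl⟩
        calc Module.finrank ℂ (center br)
            = Module.finrank ℂ (LinearMap.range ψ) :=
              (LinearMap.finrank_range_of_inj hinj).symm
          _ ≤ Module.finrank ℂ W := Submodule.finrank_mono hrange
    have hrankB : Module.finrank ℂ (Submodule.span ℂ {B}) = 1 :=
      finrank_span_singleton hBne
    have hsum := Submodule.finrank_sup_add_finrank_inf_eq (Submodule.span ℂ {B}) W
    rw [hinf, hrankB, finrank_bot] at hsum
    omega
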